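/- Let {γ_n}_{n≥0} be a CPD sequence with limsup_{n→∞} |γ_n|^{1/n} < ∞ and representing triplet (b, c, ν). The following are equivalent: (i) there exists α ≥ 0 such that |γ_n| ≤ α·n² for all n ≥ 1; (ii) limsup_{n→∞} |γ_n|^{1/n} ≤ 1; (iii) supp ν ⊆ [−1, 1]. Moreover, (iii) implies (i) with α = |γ_0| + |b| + c + ν(ℝ). -/

import Mathlib

open MeasureTheory Filter Topology
open scoped ComplexOrder

noncomputable section

/-- A real sequence `γ` is *conditionally positive definite* (CPD) if
`∑_{i,j=0}^k γ_{i+j} λ_i conj(λ_j) ≥ 0` for all finite sequences `λ_0, …, λ_k` of complex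
numbers with `∑_{i=0}^k λ_i = 0`. -/
def IsCPDSeq (γ : ℕ → ℝ) : Prop :=
  ∀ (k : ℕ) (l : ℕ → ℂ), ∑ i ∈ Finset.range (k + 1), l i = 0 →
    0 ≤ ∑ i ∈ Finset.range (k + 1), ∑ j ∈ Finset.range (k + 1),
        (γ (i + j) : ℂ) * l i * (starRingEnd ℂ) (l j)

/-- A real sequence `γ` is *positive definite* (PD) if
`∑_{i,j=0}^k γ_{i+j} λ_i conj(λ_j) ≥ 0` for all finite sequences `λ_0, …, λ_k ∈ ℂ`. -/
def IsPDSeq (γ : ℕ → ℝ) : Prop :=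
  ∀ (k : ℕ) (l : ℕ → ℂ),
    0 ≤ ∑ i ∈ Finset.range (k + 1), ∑ j ∈ Finset.range (k + 1),
        (γ (i + j) : ℂ) * l i * (starRingEnd ℂ) (l j)

/-- The polynomial `Q_n`: `Q_n(x) = 0` for `n = 0, 1` and
`Q_n(x) = ∑_{j=0}^{n-2} (n - j - 1) x^j` for `n ≥ 2`. -/
def Qpoly (n : ℕ) (x : ℝ) : ℝ :=
  ∑ j ∈ Finset.range (n - 1), ((n : ℝ) - (j : ℝ) - 1) * x ^ j

/-- `(b, c, ν)` is a representing triplet of the sequence `γ`: `b ∈ ℝ`, `c ≥ 0`, `ν` a finite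
compactly supported Borel measure on `ℝ` with `ν({1}) = 0`, and
`γ_n = γ_0 + b n + c n² + ∫ Q_n dν` for all `n`. -/
def IsRepTriplet (γ : ℕ → ℝ) (b c : ℝ) (ν : Measure ℝ) : Prop :=
  0 ≤ c ∧ IsFiniteMeasure ν ∧ (∃ K : Set ℝ, IsCompact K ∧ ν Kᶜ = 0) ∧
    ν ({1} : Set ℝ) = 0 ∧
    ∀ n : ℕ, γ n = γ 0 + b * n + c * (n : ℝ) ^ 2 + ∫ x, Qpoly n x ∂ν

/-- The sequence `n ↦ |γ_n|^{1/n}`. -/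
def rootSeq (γ : ℕ → ℝ) : ℕ → ℝ := fun n => |γ n| ^ ((1 : ℝ) / n)

/-- `limsup_{n → ∞} |γ_n|^{1/n} < ∞`, i.e. the sequence `|γ_n|^{1/n}` is (eventually)
bounded above. -/
def FiniteExpGrowth (γ : ℕ → ℝ) : Prop :=
  IsBoundedUnder (· ≤ ·) atTop (rootSeq γ)

/-- `limsup_{n → ∞} |γ_n|^{1/n}` (as a real number). -/
def limsupRoot (γ : ℕ → ℝ) : ℝ := limsup (rootSeq γ) atTop

/-- The closed support of a Borel measure on `ℝ`: the set of points all of whose open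
neighbourhoods have nonzero measure. -/
def measSupport (ν : Measure ℝ) : Set ℝ :=
  {x : ℝ | ∀ U : Set ℝ, IsOpen U → x ∈ U → ν U ≠ 0}

/-- The difference transformation `Δ`, `(Δγ)_n = γ_{n+1} - γ_n`. -/
def deltaSeq (γ : ℕ → ℝ) : ℕ → ℝ := fun n => γ (n + 1) - γ n

lemma Qpoly_succ_succ (n : ℕ) (x : ℝ) :
    Qpoly (n + 2) x = Qpoly (n + 1) x + ∑ j ∈ Finset.range (n + 1), x ^ j := by
  unfold Qpoly
  have h1 : n + 2 - 1 = n + 1 := rfl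
  have h2 : n + 1 - 1 = n := rfl
  rw [h1, h2, Finset.sum_range_succ, Finset.sum_range_succ (f := fun j : ℕ => x ^ j),
    ← add_assoc, ← Finset.sum_add_distrib]
  push_cast
  congr 1
  · exact Finset.sum_congr rfl (by intros; ring)
  · ring

lemma Qpoly_eq (n : ℕ) (x : ℝ) :
    (x - 1) ^ 2 * Qpoly n x = x ^ n - n * x + n - 1 := by
  induction n with
  | zero => simp [Qpoly]
  | succ m ih =>
    cases m with
    | zero => simp [Qpoly]
    | succ k =>
      rw [Qpoly_succ_succ, mul_add, ih]
      have hg : (x - 1) ^ 2 * ∑ j ∈ Finset.range (k + 1), x ^ j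
          = (x - 1) * (x ^ (k + 1) - 1) := by
        rw [sq, mul_assoc, mul_comm (x-1) (∑ j ∈ Finset.range (k + 1), x ^ j),
          geom_sum_mul]
      rw [hg]
      push_cast
      ring

lemma numer_nonneg {n : ℕ} (hn : Even n) (x : ℝ) : 0 ≤ x ^ n - n * x + n - 1 := by
  have h1 : |x| ^ n = x ^ n := hn.pow_abs x
  have h2 : 1 + (n : ℝ) * (|x| - 1) ≤ (1 + (|x| - 1)) ^ n :=
    one_add_mul_le_pow (by have := abs_nonneg x; linarith) n
  have h3 : (1 : ℝ) + (|x| - 1) = |x| := by ring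
  rw [h3] at h2
  have h4 : x ≤ |x| := le_abs_self x
  nlinarith

lemma Qpoly_nonneg {n : ℕ} (hn : Even n) (x : ℝ) : 0 ≤ Qpoly n x := by
  rcases eq_or_ne x 1 with h | h
  · subst h
    unfold Qpoly
    apply Finset.sum_nonneg
    intro j hj
    rw [Finset.mem_range] at hj
    have : (j : ℝ) + 2 ≤ (n : ℝ) := by exact_mod_cast (by omega : j + 2 ≤ n)
    simp only [one_pow, mul_one]
    linarith
  · have hx1 : x - 1 ≠ 0 := sub_ne_zero.mpr h
    have hpos : 0 < (x - 1) ^ 2 := sq_pos_of_ne_zero hx1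
    nlinarith [Qpoly_eq n x, numer_nonneg hn x, hpos]


lemma Qpoly_lower {n : ℕ} (hn : Even n) (hn1 : 1 ≤ n) {x r R : ℝ} (hr : 1 < r)
    (hxr : r ≤ |x|) (hxR : |x| ≤ R) (hnum : (n : ℝ) * R ≤ r ^ n) :
    (r ^ n - n * R) / (R + 1) ^ 2 ≤ Qpoly n x := by
  have hx1 : x - 1 ≠ 0 := by
    intro h
    have : x = 1 := by linarith
    rw [this] at hxr; simp at hxr; linarith
  have hpos : 0 < (x - 1) ^ 2 := sq_pos_of_ne_zero hx1
  have habs : |x| ^ n = x ^ n := hn.pow_abs x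
  have hxle : x ≤ |x| := le_abs_self x
  have hxge : -|x| ≤ x := neg_abs_le x
  have hRpos : (0:ℝ) < R := by nlinarith
  -- numerator bound
  have hnum1 : r ^ n - n * R ≤ x ^ n - n * x + n - 1 := by
    have h1 : r ^ n ≤ |x| ^ n := pow_le_pow_left₀ (by linarith) hxr n
    have h2 : (n : ℝ) * x ≤ n * R := by
      have : (0:ℝ) ≤ (n:ℝ) := Nat.cast_nonneg n
      nlinarith
    have h3 : (1:ℝ) ≤ (n:ℝ) := by exact_mod_cast hn1
    nlinarith
  -- denominator bound
  have hden : (x - 1) ^ 2 ≤ (R + 1) ^ 2 := by nlinarith [sq_abs x]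
  have hQ : Qpoly n x = (x ^ n - n * x + n - 1) / (x - 1) ^ 2 := by
    field_simp
    linarith [Qpoly_eq n x]
  rw [hQ]
  apply div_le_div₀ (by nlinarith [numer_nonneg hn x]) hnum1 hpos hden
  |>.trans_eq rfl

lemma Qpoly_continuous (n : ℕ) : Continuous fun x : ℝ => Qpoly n x := by
  unfold Qpoly
  exact continuous_finset_sum _ fun j _ => (continuous_const.mul (continuous_pow j))

lemma measSupport_compl_null (ν : Measure ℝ) :
    ν (measSupport ν)ᶜ = 0 := by
  set S := measSupport ν
  let ι := {U : Set ℝ // IsOpen U ∧ ν U = 0}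
  obtain ⟨T, hTc, hTU⟩ := TopologicalSpace.isOpen_iUnion_countable
    (fun i : ι => (i : Set ℝ)) (fun i => i.2.1)
  have hsub : Sᶜ ⊆ ⋃ i ∈ T, (i : Set ℝ) := by
    rw [hTU]
    intro x hx
    simp only [S, measSupport, Set.mem_compl_iff, Set.mem_setOf_eq, not_forall] at hx
    obtain ⟨U, hU, hxU, hνU⟩ := hx
    push_neg at hνU
    exact Set.mem_iUnion.mpr ⟨⟨U, hU, by simpa using hνU⟩, hxU⟩
  refine measure_mono_null hsub ?_
  exact (measure_biUnion_null_iff hTc).mpr fun i _ => i.2.2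

lemma Qpoly_bound_on_Icc {n : ℕ} {x : ℝ} (hx : |x| ≤ 1) : ‖Qpoly n x‖ ≤ (n : ℝ) ^ 2 := by
  unfold Qpoly
  calc ‖∑ j ∈ Finset.range (n - 1), ((n : ℝ) - j - 1) * x ^ j‖
      ≤ ∑ j ∈ Finset.range (n - 1), ‖((n : ℝ) - j - 1) * x ^ j‖ :=
        norm_sum_le _ _
    _ ≤ ∑ j ∈ Finset.range (n - 1), (n : ℝ) := by
        apply Finset.sum_le_sum
        intro j hj
        rw [Finset.mem_range] at hj
        have hc : (j : ℝ) + 2 ≤ (n : ℝ) := by exact_mod_cast (by omega : j + 2 ≤ n)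
        rw [norm_mul]
        have h1 : ‖(n : ℝ) - j - 1‖ ≤ (n : ℝ) := by
          rw [Real.norm_eq_abs, abs_of_nonneg (by linarith)]
          have : (0:ℝ) ≤ (j:ℝ) := Nat.cast_nonneg j
          linarith
        have h2 : ‖x ^ j‖ ≤ 1 := by
          rw [norm_pow, Real.norm_eq_abs]
          exact pow_le_one₀ (abs_nonneg x) hx
        calc ‖(n : ℝ) - j - 1‖ * ‖x ^ j‖ ≤ (n:ℝ) * 1 :=
              mul_le_mul h1 h2 (norm_nonneg _) (Nat.cast_nonneg n)
          _ = (n:ℝ) := mul_one _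
    _ ≤ (n : ℝ) ^ 2 := by
        rw [Finset.sum_const, Finset.card_range, nsmul_eq_mul]
        have : ((n - 1 : ℕ) : ℝ) ≤ (n : ℝ) := by exact_mod_cast Nat.sub_le n 1
        nlinarith [Nat.cast_nonneg (α := ℝ) n]

lemma partA {γ : ℕ → ℝ} {b c : ℝ} {ν : Measure ℝ} (hrep : IsRepTriplet γ b c ν)
    (hsupp : measSupport ν ⊆ Set.Icc (-1 : ℝ) 1) :
    ∀ n : ℕ, 1 ≤ n → |γ n| ≤ (|γ 0| + |b| + c + (ν Set.univ).toReal) * (n : ℝ) ^ 2 := by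
  obtain ⟨hc, hfin, -, -, hf⟩ := hrep
  haveI := hfin
  intro n hn
  have hmem : ∀ᵐ x ∂ν, x ∈ measSupport ν := by
    rw [MeasureTheory.ae_iff]
    simpa [measSupport, Set.compl_def] using measSupport_compl_null ν
  have hae : ∀ᵐ x ∂ν, ‖Qpoly n x‖ ≤ (n : ℝ) ^ 2 := by
    refine hmem.mono fun x hx => ?_
    have h := hsupp hx
    exact Qpoly_bound_on_Icc (abs_le.mpr ⟨h.1, h.2⟩)
  have h1 : |∫ x, Qpoly n x ∂ν| ≤ (n : ℝ) ^ 2 * (ν Set.univ).toReal := by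
    simpa [Real.norm_eq_abs, Measure.real] using norm_integral_le_of_norm_le_const hae
  have hcast : (1 : ℝ) ≤ (n : ℝ) := by exact_mod_cast hn
  have htnn : 0 ≤ (ν Set.univ).toReal := ENNReal.toReal_nonneg
  have habs : |γ n| ≤ |γ 0| + |b| * n + c * (n : ℝ) ^ 2
      + (n : ℝ) ^ 2 * (ν Set.univ).toReal := by
    rw [hf n]
    have h4 := abs_add_le (γ 0 + b * n + c * (n : ℝ) ^ 2) (∫ x, Qpoly n x ∂ν)
    have h2 := abs_add_le (γ 0 + b * n) (c * (n : ℝ) ^ 2)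
    have h3 := abs_add_le (γ 0) (b * (n : ℝ))
    have hb : |b * (n : ℝ)| = |b| * n := by
      rw [abs_mul, abs_of_nonneg (by positivity : (0:ℝ) ≤ (n : ℝ))]
    have hcc : |c * (n : ℝ) ^ 2| = c * (n : ℝ) ^ 2 := by
      rw [abs_mul, abs_of_nonneg hc, abs_of_nonneg (by positivity : (0:ℝ) ≤ (n:ℝ)^2)]
    linarith
  nlinarith [abs_nonneg (γ 0), abs_nonneg b, htnn, hcast, hc,
    mul_nonneg (abs_nonneg (γ 0)) (by nlinarith : (0:ℝ) ≤ (n:ℝ)^2 - 1),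
    mul_nonneg (abs_nonneg b) (by nlinarith : (0:ℝ) ≤ (n:ℝ)^2 - n)]

lemma rootSeq_nonneg (γ : ℕ → ℝ) (n : ℕ) : 0 ≤ rootSeq γ n :=
  Real.rpow_nonneg (abs_nonneg _) _

lemma rootSeq_cobounded (γ : ℕ → ℝ) : IsCoboundedUnder (· ≤ ·) atTop (rootSeq γ) :=
  isCoboundedUnder_le_of_le atTop (rootSeq_nonneg γ)

lemma pow_root_eq {a : ℝ} (ha : 0 ≤ a) {n : ℕ} (hn : 1 ≤ n) :
    (a ^ n) ^ ((1 : ℝ) / n) = a := by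
  have hne : (n : ℝ) ≠ 0 := Nat.cast_ne_zero.mpr (by omega)
  rw [← Real.rpow_natCast a n, ← Real.rpow_mul ha, mul_one_div, div_self hne,
    Real.rpow_one]

lemma partB {γ : ℕ → ℝ}
    (h : ∃ α : ℝ, 0 ≤ α ∧ ∀ n : ℕ, 1 ≤ n → |γ n| ≤ α * (n : ℝ) ^ 2) :
    limsupRoot γ ≤ 1 := by
  obtain ⟨α, hα, hb⟩ := h
  refine le_of_forall_pos_le_add fun ε hε => ?_
  have htd : Tendsto (fun n : ℕ => (n : ℝ) ^ 2 / (1 + ε) ^ n) atTop (𝓝 0) :=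
    tendsto_pow_const_div_const_pow_of_one_lt 2 (by linarith)
  have hlt : ∀ᶠ n : ℕ in atTop, (n : ℝ) ^ 2 / (1 + ε) ^ n < 1 / (α + 1) :=
    htd.eventually_lt_const (by positivity)
  have hev : ∀ᶠ n : ℕ in atTop, rootSeq γ n ≤ 1 + ε := by
    filter_upwards [hlt, eventually_ge_atTop 1] with n hn hn1
    have hpow : (0 : ℝ) < (1 + ε) ^ n := by positivity
    have h2 : (n : ℝ) ^ 2 * (α + 1) < (1 + ε) ^ n := by
      have := (div_lt_div_iff₀ hpow (by linarith : (0 : ℝ) < α + 1)).mp hn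
      linarith
    have hle : |γ n| ≤ (1 + ε) ^ n := by
      nlinarith [hb n hn1, sq_nonneg (n : ℝ)]
    calc rootSeq γ n ≤ ((1 + ε) ^ n) ^ ((1 : ℝ) / n) :=
          Real.rpow_le_rpow (abs_nonneg _) hle (by positivity)
      _ = 1 + ε := pow_root_eq (by linarith) hn1
  exact limsup_le_of_le (rootSeq_cobounded γ) hev

lemma partC {γ : ℕ → ℝ} (hg : FiniteExpGrowth γ) {b c : ℝ} {ν : Measure ℝ}
    (hrep : IsRepTriplet γ b c ν) (hls : limsupRoot γ ≤ 1) :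
    measSupport ν ⊆ Set.Icc (-1 : ℝ) 1 := by
  by_contra hcon
  obtain ⟨x₀, hx₀s, hx₀⟩ := Set.not_subset.mp hcon
  have hx1 : 1 < |x₀| := by
    by_contra h
    push_neg at h
    exact hx₀ (Set.mem_Icc.mpr (abs_le.mp h))
  obtain ⟨hc, hfin, ⟨K, hK, hKc⟩, hone, hf⟩ := hrep
  haveI := hfin
  set δ : ℝ := (|x₀| - 1) / 2 with hδdef
  have hδpos : 0 < δ := by rw [hδdef]; linarith
  set r : ℝ := (|x₀| + 1) / 2 with hrdef
  set R : ℝ := |x₀| + δ with hRdef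
  have hr1 : 1 < r := by rw [hrdef]; linarith
  have hrR : r ≤ R := by rw [hrdef, hRdef, hδdef]; linarith
  have hU : ν (Metric.ball x₀ δ) ≠ 0 :=
    hx₀s _ Metric.isOpen_ball (Metric.mem_ball_self hδpos)
  set m : ℝ := (ν (Metric.ball x₀ δ)).toReal with hmdef
  have hm : 0 < m := ENNReal.toReal_pos hU (measure_ne_top ν _)
  have hball : ∀ x ∈ Metric.ball x₀ δ, r ≤ |x| ∧ |x| ≤ R := by
    intro x hx
    rw [Metric.mem_ball, Real.dist_eq] at hx
    have h1 := abs_sub_abs_le_abs_sub x₀ x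
    have h2 := abs_sub_abs_le_abs_sub x x₀
    rw [abs_sub_comm] at h1
    constructor
    · rw [hrdef]; rw [hδdef] at hx; linarith
    · rw [hRdef]; linarith
  have hint : ∀ n : ℕ, Integrable (fun x => Qpoly n x) ν := by
    intro n
    obtain ⟨C, hC⟩ := hK.exists_bound_of_continuousOn (Qpoly_continuous n).continuousOn
    have haeK : ∀ᵐ x ∂ν, x ∈ K := by
      rw [MeasureTheory.ae_iff]
      simpa [Set.compl_def] using hKc
    exact ⟨(Qpoly_continuous n).aestronglyMeasurable,
      HasFiniteIntegral.of_bounded (haeK.mono fun x hx => hC x hx)⟩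
  have key : ∀ n : ℕ, Even n → 1 ≤ n → (n : ℝ) * R ≤ r ^ n →
      (r ^ n - n * R) / (R + 1) ^ 2 * m ≤ ∫ x, Qpoly n x ∂ν := by
    intro n hne hn1 hnum
    have h1 : (r ^ n - n * R) / (R + 1) ^ 2 * m
        ≤ ∫ x in Metric.ball x₀ δ, Qpoly n x ∂ν := by
      have := setIntegral_ge_of_const_le_real measurableSet_ball (measure_ne_top ν _)
        (fun x hx => Qpoly_lower hne hn1 hr1 (hball x hx).1 (hball x hx).2 hnum)
        ((hint n).integrableOn)
      exact this
    have h2 : ∫ x in Metric.ball x₀ δ, Qpoly n x ∂ν ≤ ∫ x, Qpoly n x ∂ν :=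
      setIntegral_le_integral (hint n) (Filter.Eventually.of_forall fun x => Qpoly_nonneg hne x)
    linarith
  -- exponential domination
  set s : ℝ := (1 + r) / 2 with hsdef
  have hs1 : 1 < s := by rw [hsdef]; linarith
  have hsr : s < r := by rw [hsdef]; linarith
  have hr0 : (0 : ℝ) < r := by linarith
  have hR1 : (0 : ℝ) < R + 1 := by linarith
  set C : ℝ := m / (R + 1) ^ 2 with hCdef
  have hCpos : 0 < C := by rw [hCdef]; positivity
  set D : ℝ := |b| + C * R + 1 with hDdef
  have t1 : Tendsto (fun n : ℕ => (s / r) ^ n) atTop (𝓝 0) :=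
    tendsto_pow_atTop_nhds_zero_of_lt_one (by positivity) ((div_lt_one hr0).mpr hsr)
  have t2 : Tendsto (fun n : ℕ => (n : ℝ) / r ^ n) atTop (𝓝 0) := by
    simpa using tendsto_pow_const_div_const_pow_of_one_lt 1 hr1
  have t3 : Tendsto (fun n : ℕ => |γ 0| / r ^ n) atTop (𝓝 0) :=
    tendsto_const_nhds.div_atTop (tendsto_pow_atTop_atTop_of_one_lt hr1)
  have ht : Tendsto (fun n : ℕ => (s / r) ^ n + D * ((n : ℝ) / r ^ n) + |γ 0| / r ^ n)
      atTop (𝓝 0) := by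
    have := (t1.add (t2.const_mul D)).add t3
    simpa using this
  have hev1 : ∀ᶠ n : ℕ in atTop,
      (s / r) ^ n + D * ((n : ℝ) / r ^ n) + |γ 0| / r ^ n < C :=
    ht.eventually_lt_const hCpos
  have hev2 : ∀ᶠ n : ℕ in atTop, (n : ℝ) * R ≤ r ^ n := by
    have h4 : ∀ᶠ n : ℕ in atTop, (n : ℝ) / r ^ n < 1 / R := by
      refine t2.eventually_lt_const (by positivity : (0:ℝ) < 1 / R)
    filter_upwards [h4] with n hn
    have hpow : (0 : ℝ) < r ^ n := by positivity
    have hRpos : (0 : ℝ) < R := by linarith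
    rw [div_lt_div_iff₀ hpow hRpos] at hn
    linarith
  have hfreq : ∃ᶠ n : ℕ in atTop, Even n := by
    rw [Filter.frequently_atTop]
    intro N
    exact ⟨2 * N, by omega, ⟨N, by omega⟩⟩
  have hsle : s ≤ limsupRoot γ := by
    refine le_limsup_of_frequently_le ?_ hg
    refine (hfreq.and_eventually (hev1.and (hev2.and (eventually_ge_atTop 1)))).mono ?_
    rintro n ⟨hne, h1, h2, hn1⟩
    have hpow : (0 : ℝ) < r ^ n := pow_pos hr0 n
    have hmul : s ^ n + D * (n : ℝ) + |γ 0| < C * r ^ n := by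
      have := (mul_lt_mul_of_pos_right h1 hpow)
      have hrw : ((s / r) ^ n + D * ((n : ℝ) / r ^ n) + |γ 0| / r ^ n) * r ^ n
          = s ^ n + D * (n : ℝ) + |γ 0| := by
        field_simp
        rw [div_pow, div_mul_cancel₀ _ (pow_ne_zero n hr0.ne')]
      rw [hrw] at this
      linarith
    have hI : (r ^ n - n * R) / (R + 1) ^ 2 * m ≤ ∫ x, Qpoly n x ∂ν := key n hne hn1 h2
    have hIC : C * (r ^ n - n * R) ≤ ∫ x, Qpoly n x ∂ν := by
      have heq : C * (r ^ n - (n : ℝ) * R) = (r ^ n - n * R) / (R + 1) ^ 2 * m := by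
        rw [hCdef]; ring
      rw [heq]; exact hI
    have hγn : s ^ n ≤ γ n := by
      rw [hf n]
      have hcn : 0 ≤ c * (n : ℝ) ^ 2 := by positivity
      have hbn : -(|b| * n) ≤ b * n := by
        have := neg_abs_le b
        have hn0 : (0:ℝ) ≤ (n:ℝ) := Nat.cast_nonneg n
        nlinarith
      have hg0 : -|γ 0| ≤ γ 0 := neg_abs_le _
      rw [hDdef] at hmul
      linarith [hIC, hmul, hg0, hbn, hcn, Nat.cast_nonneg (α := ℝ) n]
    have hsn : (0:ℝ) ≤ s ^ n := (pow_pos (by linarith : (0:ℝ) < s) n).le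
    have habs : s ^ n ≤ |γ n| := le_trans hγn (le_abs_self _)
    calc s = (s ^ n) ^ ((1:ℝ)/n) := (pow_root_eq (by linarith) hn1).symm
      _ ≤ rootSeq γ n := Real.rpow_le_rpow hsn habs (by positivity)
  linarith

/-- Proposition `grown`: for a CPD sequence `γ` of at most exponential growth with representing
triplet `(b, c, ν)`, the following are equivalent: (i) `|γ_n| ≤ α n²` for some `α ≥ 0` and all
`n ≥ 1`; (ii) `limsup |γ_n|^{1/n} ≤ 1`; (iii) `supp ν ⊆ [-1, 1]`.  Moreover, (iii) implies (i)
with `α = |γ_0| + |b| + c + ν(ℝ)`. -/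
theorem cpd_polynomial_growth (γ : ℕ → ℝ) (hcpd : IsCPDSeq γ) (hg : FiniteExpGrowth γ)
    (b c : ℝ) (ν : Measure ℝ) (hrep : IsRepTriplet γ b c ν) :
    ((∃ α : ℝ, 0 ≤ α ∧ ∀ n : ℕ, 1 ≤ n → |γ n| ≤ α * (n : ℝ) ^ 2) ↔ limsupRoot γ ≤ 1) ∧
    (limsupRoot γ ≤ 1 ↔ measSupport ν ⊆ Set.Icc (-1 : ℝ) 1) ∧
    (measSupport ν ⊆ Set.Icc (-1 : ℝ) 1 →
      ∀ n : ℕ, 1 ≤ n →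
        |γ n| ≤ (|γ 0| + |b| + c + (ν Set.univ).toReal) * (n : ℝ) ^ 2) := by
  have hA := partA hrep
  have hα : 0 ≤ |γ 0| + |b| + c + (ν Set.univ).toReal :=
    add_nonneg (add_nonneg (add_nonneg (abs_nonneg _) (abs_nonneg _)) hrep.1)
      ENNReal.toReal_nonneg
  refine ⟨⟨partB, fun hls => ⟨_, hα, hA (partC hg hrep hls)⟩⟩,
    ⟨partC hg hrep, fun hsupp => partB ⟨_, hα, hA hsupp⟩⟩,
    fun hsupp => hA hsupp⟩

end
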